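/- For any λ > 0, x ≥ 1 and y ≥ 0, the quantity f_λ(x,y) = ((x-1)^{λ/r}/r) · ∫_0^{min(y/x,1)} u^{λ/r} (y-u)^{-λ/r-1} du satisfies f_λ(x,y) ≤ 1/λ. -/

import Mathlib

theorem stmt_1 (r : ℝ) (hr : 0 < r) (lam : ℝ) (hlam : 0 < lam)
    (x y : ℝ) (hx : 1 ≤ x) (hy : 0 ≤ y) :
    ((x - 1) ^ (lam / r) / r) *
      ∫ u in (0:ℝ)..(min (y / x) 1), u ^ (lam / r) * (y - u) ^ (-(lam / r) - 1) ≤ 1 / lam := by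
  have hp : 0 < lam / r := div_pos hlam hr
  set p := lam / r with hpdef
  rcases eq_or_lt_of_le hx with hx1 | hx1
  · rw [← hx1]
    simp [Real.zero_rpow (ne_of_gt hp)]
    positivity
  rcases eq_or_lt_of_le hy with hy0 | hy0
  · rw [← hy0]
    norm_num
    positivity
  have hx0 : (0:ℝ) < x := lt_trans one_pos hx1
  set m := min (y / x) 1 with hm
  have hm0 : 0 < m := lt_min (div_pos hy0 hx0) one_pos
  have hmy : m < y := lt_of_le_of_lt (min_le_left _ _) (div_lt_self hy0 hx1)
  have hym : 0 < y - m := sub_pos.2 hmy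
  have hxm : (x - 1) * m ≤ y - m := by
    have hmx : m * x ≤ y := (le_div_iff₀ hx0).1 (min_le_left _ _)
    nlinarith
  -- antiderivative
  set F : ℝ → ℝ := fun u => u ^ p * (y - u) ^ (-p) / p with hF
  set D : ℝ → ℝ := fun u => u ^ (p - 1) * (y - u) ^ (-p) + u ^ p * (y - u) ^ (-p - 1) with hD
  have hcont1 : ∀ c : ℝ, ContinuousOn (fun u : ℝ => (y - u) ^ c) (Set.Icc 0 m) := by
    intro c u hu
    have hne : y - u ≠ 0 := by have := hu.2; intro h; nlinarith
    exact ((Real.continuousAt_rpow_const _ _ (Or.inl hne)).comp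
      ((continuous_const.sub continuous_id).continuousAt)).continuousWithinAt
  have huIcc : Set.uIcc (0:ℝ) m = Set.Icc 0 m := Set.uIcc_of_le hm0.le
  have hDint : IntervalIntegrable D MeasureTheory.volume 0 m := by
    apply IntervalIntegrable.add
    · exact (intervalIntegral.intervalIntegrable_rpow' (by linarith)).mul_continuousOn
        (by rw [huIcc]; exact hcont1 (-p))
    · exact (intervalIntegral.intervalIntegrable_rpow' (by linarith)).mul_continuousOn
        (by rw [huIcc]; exact hcont1 (-p - 1))
  have hgint : IntervalIntegrable (fun u : ℝ => u ^ p * (y - u) ^ (-p - 1))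
      MeasureTheory.volume 0 m :=
    (intervalIntegral.intervalIntegrable_rpow' (by linarith)).mul_continuousOn
      (by rw [huIcc]; exact hcont1 (-p - 1))
  have hFcont : ContinuousOn F (Set.Icc 0 m) := by
    apply ContinuousOn.div_const
    apply ContinuousOn.mul _ (hcont1 (-p))
    intro u hu
    exact (Real.continuousAt_rpow_const u p (Or.inr hp.le)).continuousWithinAt
  have hF' : ∀ u ∈ Set.Ioo (0:ℝ) m, HasDerivWithinAt F (D u) (Set.Ioi u) u := by
    intro u hu
    have hu0 : u ≠ 0 := ne_of_gt hu.1
    have hyu : 0 < y - u := by have := hu.2; linarith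
    have h1 : HasDerivAt (fun u : ℝ => u ^ p) (p * u ^ (p - 1)) u :=
      Real.hasDerivAt_rpow_const (Or.inl hu0)
    have h2 : HasDerivAt (fun u : ℝ => (y - u) ^ (-p)) (p * (y - u) ^ (-p - 1)) u := by
      have h3 : HasDerivAt (fun u : ℝ => y - u) (-1) u := by
        simpa using (hasDerivAt_id u).const_sub y
      have := (Real.hasDerivAt_rpow_const (p := -p)
        (Or.inl (ne_of_gt hyu))).comp u h3
      exact this.congr_deriv (by ring)
    have hmul := (h1.mul h2).div_const p
    apply HasDerivAt.hasDerivWithinAt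
    exact hmul.congr_deriv (by rw [div_eq_iff hp.ne']; simp only [hD]; ring)
  have hFTC : ∫ u in (0:ℝ)..m, D u = F m - F 0 :=
    intervalIntegral.integral_eq_sub_of_hasDeriv_right_of_le hm0.le hFcont hF' hDint
  have hmono : (∫ u in (0:ℝ)..m, u ^ p * (y - u) ^ (-p - 1)) ≤ ∫ u in (0:ℝ)..m, D u := by
    apply intervalIntegral.integral_mono_on hm0.le hgint hDint
    intro u hu
    have h1 : 0 ≤ u ^ (p - 1) * (y - u) ^ (-p) :=
      mul_nonneg (Real.rpow_nonneg hu.1 _) (Real.rpow_nonneg (by have := hu.2; linarith) _)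
    simp only [hD]
    linarith
  have hFval : F m - F 0 = m ^ p * (y - m) ^ (-p) / p := by
    simp [hF, Real.zero_rpow (ne_of_gt hp)]
  have key : (∫ u in (0:ℝ)..m, u ^ p * (y - u) ^ (-p - 1)) ≤ m ^ p * (y - m) ^ (-p) / p := by
    rw [← hFval, ← hFTC]; exact hmono
  have halpha : (0:ℝ) ≤ (x - 1) ^ p / r := div_nonneg (Real.rpow_nonneg (by linarith) _) hr.le
  have hint : ∀ u : ℝ, u ^ p * (y - u) ^ (-p - 1) = u ^ p * (y - u) ^ (-(p) - 1) := by
    intro u; norm_num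
  calc ((x - 1) ^ p / r) * ∫ u in (0:ℝ)..m, u ^ p * (y - u) ^ (-p - 1)
      ≤ ((x - 1) ^ p / r) * (m ^ p * (y - m) ^ (-p) / p) :=
        mul_le_mul_of_nonneg_left key halpha
    _ = ((x - 1) ^ p * m ^ p * (y - m) ^ (-p)) / (r * p) := by ring
    _ ≤ 1 / (r * p) := by
        gcongr
        calc (x - 1) ^ p * m ^ p * (y - m) ^ (-p)
            = (((x - 1) * m) / (y - m)) ^ p := by
              rw [Real.div_rpow (mul_nonneg (by linarith) hm0.le) hym.le,
                ← Real.mul_rpow (by linarith) hm0.le, Real.rpow_neg hym.le, div_eq_mul_inv]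
          _ ≤ 1 := Real.rpow_le_one (div_nonneg (mul_nonneg (by linarith) hm0.le) hym.le)
              ((div_le_one hym).2 hxm) hp.le
    _ = 1 / lam := by
        rw [hpdef]; field_simp
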